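/- For any prime p, (1/p)·C(3p-2, p-1) is an integer and is congruent to -2 modulo p. -/

import Mathlib

theorem choose_div_p_mod (p : ℕ) (hp : p.Prime) :
    ∃ m : ℤ, (Nat.choose (3 * p - 2) (p - 1) : ℤ) = (p : ℤ) * m ∧
      Int.ModEq (p : ℤ) m (-2) := by
  have hp2 := hp.two_le
  have hfact : Fact p.Prime := ⟨hp⟩
  have h1 : Nat.succ (3 * p - 2) = 3 * p - 1 := by omega
  have h2 : Nat.succ (p - 1) = p := by omega
  have key : (3 * p - 1) * Nat.choose (3 * p - 2) (p - 1)
      = Nat.choose (3 * p - 1) p * p := by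
    have := Nat.add_one_mul_choose_eq (3 * p - 2) (p - 1)
    rwa [show 3 * p - 2 + 1 = 3 * p - 1 by omega, show p - 1 + 1 = p by omega] at this
  -- p divides the binomial coefficient
  have hdvd : p ∣ Nat.choose (3 * p - 2) (p - 1) := by
    have hd : p ∣ (3 * p - 1) * Nat.choose (3 * p - 2) (p - 1) := by
      rw [key]; exact dvd_mul_left p _
    rcases (hp.dvd_mul.mp hd) with h | h
    · exfalso
      have h1' : p ∣ 1 := by
        have := Nat.dvd_sub (Dvd.intro 3 (mul_comm p 3)) h
        simpa [show 3 * p - (3 * p - 1) = 1 by omega] using this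
      have := Nat.le_of_dvd one_pos h1'
      omega
    · exact h
  obtain ⟨m, hm⟩ := hdvd
  refine ⟨(m : ℤ), by exact_mod_cast hm, ?_⟩
  -- Lucas: choose (3p-1) p ≡ 2 [MOD p]
  have hmod : (3 * p - 1) % p = p - 1 := by
    rw [show 3 * p - 1 = (p - 1) + p * 2 by omega, Nat.add_mul_mod_self_left,
      Nat.mod_eq_of_lt (by omega)]
  have hdiv : (3 * p - 1) / p = 2 := by
    apply Nat.div_eq_of_lt_le <;> omega
  have hkmod : p % p = 0 := Nat.mod_self p
  have hkdiv : p / p = 1 := Nat.div_self (by omega)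
  have lucas : Nat.choose (3 * p - 1) p ≡ 2 [MOD p] := by
    have := Choose.choose_modEq_choose_mod_mul_choose_div_nat
      (n := 3 * p - 1) (k := p) (p := p)
    rwa [hmod, hdiv, hkmod, hkdiv, Nat.choose_zero_right, Nat.choose_one_right,
      one_mul] at this
  -- (3p-1) * m = choose (3p-1) p
  have key2 : (3 * p - 1) * m = Nat.choose (3 * p - 1) p := by
    have hkey : (3 * p - 1) * m * p = Nat.choose (3 * p - 1) p * p := by
      calc (3 * p - 1) * m * p = (3 * p - 1) * (p * m) := by ring
        _ = Nat.choose (3 * p - 1) p * p := by rw [← hm, key]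
    exact Nat.eq_of_mul_eq_mul_right (by omega) hkey
  -- now conclude mod p in ℤ
  have h3 : ((3 * p - 1 : ℕ) : ℤ) = 3 * p - 1 := by
    push_cast [Nat.cast_sub (by omega : 1 ≤ 3 * p)]; ring
  have lucasZ : (Nat.choose (3 * p - 1) p : ℤ) ≡ 2 [ZMOD p] := by
    exact_mod_cast (Int.natCast_modEq_iff).mpr lucas
  have key2Z : ((3 : ℤ) * p - 1) * m = (Nat.choose (3 * p - 1) p : ℤ) := by
    rw [← h3]; exact_mod_cast key2
  have h4 : ((3 : ℤ) * p - 1) * m ≡ 2 [ZMOD p] := key2Z ▸ lucasZ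
  have h5 : ((3 : ℤ) * p - 1) * m ≡ (-1) * m [ZMOD p] := by
    apply Int.ModEq.mul_right
    have : (3 : ℤ) * p - 1 - (-1) = p * 3 := by ring
    exact (Int.modEq_iff_dvd.mpr (by rw [Int.sub_neg]; exact ⟨3, by ring⟩)).symm
  have h6 : (-1 : ℤ) * m ≡ 2 [ZMOD p] := h5.symm.trans h4
  simpa using h6.neg
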